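/- Let σ ⊆ N_ℝ be a d-dimensional simplicial rational cone with dual cone σ^∨ ⊆ M_ℝ. Any semigroup homomorphism φ: σ^∨ ∩ M → ℕ extends uniquely to a group homomorphism M → ℤ, which is of the form u ↦ ⟨u, v⟩ for a unique v ∈ σ ∩ N. -/

import Mathlib

/-- The rational polyhedral cone generated by lattice vectors `g_1, …, g_m` in `ℝ^d`. -/
def rationalCone (d m : ℕ) (g : Fin m → Fin d → ℤ) : Set (Fin d → ℝ) :=
  {x | ∃ c : Fin m → ℝ, (∀ i, 0 ≤ c i) ∧ ∀ j, x j = ∑ i, c i * (g i j : ℝ)}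

/-- Any nonempty open subset of `ℝ^d` closed under positive scaling contains an integer point. -/
lemma exists_int_point {d : ℕ} (U : Set (Fin d → ℝ)) (hU : IsOpen U)
    (hcone : ∀ y ∈ U, ∀ t : ℝ, 0 < t → t • y ∈ U) (hne : U.Nonempty) :
    ∃ u : Fin d → ℤ, (fun j => (u j : ℝ)) ∈ U := by
  obtain ⟨y, hy⟩ := hne
  obtain ⟨ε, hε, hball⟩ := Metric.isOpen_iff.1 hU y hy
  obtain ⟨N, hN⟩ := exists_nat_one_div_lt hε
  have hNpos : (0:ℝ) < (N:ℝ) + 1 := by positivity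
  set q : Fin d → ℝ := fun j => (⌊y j * ((N:ℝ)+1)⌋ : ℝ) / ((N:ℝ)+1) with hq
  have hqU : q ∈ U := by
    apply hball
    rw [Metric.mem_ball, dist_pi_lt_iff hε]
    intro j
    rw [Real.dist_eq]
    have h1 : q j - y j = -(Int.fract (y j * ((N:ℝ)+1)) / ((N:ℝ)+1)) := by
      have hf : Int.fract (y j * ((N:ℝ)+1)) = y j * ((N:ℝ)+1) - ⌊y j * ((N:ℝ)+1)⌋ := rfl
      have hqj : q j = (⌊y j * ((N:ℝ)+1)⌋ : ℝ) / ((N:ℝ)+1) := rfl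
      rw [hqj, hf, sub_div, mul_div_cancel_right₀ _ (ne_of_gt hNpos)]
      ring
    rw [h1, abs_neg, abs_div, abs_of_nonneg (Int.fract_nonneg _), abs_of_pos hNpos]
    calc Int.fract (y j * ((N:ℝ)+1)) / ((N:ℝ)+1) < 1 / ((N:ℝ)+1) :=
          div_lt_div_of_pos_right (Int.fract_lt_one _) hNpos
      _ < ε := hN
  refine ⟨fun j => ⌊y j * ((N:ℝ)+1)⌋, ?_⟩
  have : (fun j => ((⌊y j * ((N:ℝ)+1)⌋ : ℤ) : ℝ)) = ((N:ℝ)+1) • q := by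
    funext j
    rw [hq]
    simp only [Pi.smul_apply, smul_eq_mul]
    field_simp
  rw [this]
  exact hcone q hqU _ hNpos


def coneSet {d m : ℕ} (v : Fin m → Fin d → ℝ) : Set (Fin d → ℝ) :=
  {x | ∃ c : Fin m → ℝ, (∀ i, 0 ≤ c i) ∧ x = ∑ i, c i • v i}

/-- Carathéodory-type lemma for cones. -/
lemma cone_cara {d m : ℕ} (v : Fin m → Fin d → ℝ) (n : ℕ) :
    ∀ s : Finset (Fin m), s.card ≤ n → ∀ c : Fin m → ℝ, (∀ i, 0 ≤ c i) → (∀ i ∉ s, c i = 0) →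
    ∃ t : Finset (Fin m), (LinearIndependent ℝ (fun i : t => v i)) ∧
      ∃ c' : Fin m → ℝ, (∀ i, 0 ≤ c' i) ∧ (∀ i ∉ t, c' i = 0) ∧
        ∑ i, c' i • v i = ∑ i, c i • v i := by
  induction n with
  | zero =>
    intro s hs c hc0 hcs
    refine ⟨∅, linearIndependent_empty_type, c, hc0, fun i _ => ?_, rfl⟩
    exact hcs i (by simp [Finset.card_eq_zero.1 (Nat.le_zero.1 hs)])
  | succ n ih =>
    intro s hs c hc0 hcs
    by_cases hli : LinearIndependent ℝ (fun i : s => v i)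
    · exact ⟨s, hli, c, hc0, hcs, rfl⟩
    obtain ⟨gcoef, hgsum, i₁, hi₁⟩ := Fintype.not_linearIndependent_iff.1 hli
    -- extend to Fin m, with a positive value somewhere
    set gext : Fin m → ℝ := fun i => if h : i ∈ s then gcoef ⟨i, h⟩ else 0 with hgext
    have hgext_sum : ∑ i, gext i • v i = 0 := by
      rw [← Finset.sum_subset s.subset_univ (fun i _ hi => by simp [hgext, dif_neg hi])]
      rw [← Finset.sum_attach s (fun i => gext i • v i)]
      rw [← hgsum]
      exact Finset.sum_congr rfl fun i _ => by simp [hgext, dif_pos i.2]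
    have hgext_supp : ∀ i ∉ s, gext i = 0 := fun i hi => by simp [hgext, dif_neg hi]
    have hgext_ne : gext (i₁ : Fin m) ≠ 0 := by simpa [hgext, dif_pos i₁.2] using hi₁
    have key : ∀ D : Fin m → ℝ, (∑ i, D i • v i = 0) → (∀ i ∉ s, D i = 0) → (∃ i, 0 < D i) →
        ∃ t : Finset (Fin m), (LinearIndependent ℝ (fun i : t => v i)) ∧
          ∃ c' : Fin m → ℝ, (∀ i, 0 ≤ c' i) ∧ (∀ i ∉ t, c' i = 0) ∧
            ∑ i, c' i • v i = ∑ i, c i • v i := by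
      intro D hD0 hDs hDpos
      have hTne : (Finset.univ.filter (fun i => 0 < D i)).Nonempty := by
        obtain ⟨i, hi⟩ := hDpos
        exact ⟨i, by simp [hi]⟩
      obtain ⟨istar, histar, hmin⟩ :=
        (Finset.univ.filter (fun i => 0 < D i)).exists_min_image (fun i => c i / D i) hTne
      have hDstar : 0 < D istar := by simpa using histar
      have histar_s : istar ∈ s := by
        by_contra h
        exact absurd (hDs istar h) (ne_of_gt hDstar)
      set tmin := c istar / D istar with htmin
      have htmin0 : 0 ≤ tmin := div_nonneg (hc0 istar) hDstar.le
      set c' : Fin m → ℝ := fun i => c i - tmin * D i with hc'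
      have hc'0 : ∀ i, 0 ≤ c' i := by
        intro i
        rcases lt_or_ge 0 (D i) with hDi | hDi
        · have := hmin i (by simp [hDi])
          rw [le_div_iff₀ hDi] at this
          simp only [hc']
          nlinarith
        · have : tmin * D i ≤ 0 := mul_nonpos_of_nonneg_of_nonpos htmin0 hDi
          simp only [hc']
          nlinarith [hc0 i]
      have hc'star : c' istar = 0 := by
        simp only [hc', htmin]
        field_simp
        simp
      have hc'supp : ∀ i ∉ s.erase istar, c' i = 0 := by
        intro i hi
        rw [Finset.mem_erase] at hi
        push_neg at hi
        by_cases his : i ∈ s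
        · have heq : i = istar := by
            by_contra h
            exact (hi h) his
          rw [heq, hc'star]
        · simp only [hc', hcs i his, hDs i his, mul_zero, sub_zero]
      have hc'sum : ∑ i, c' i • v i = ∑ i, c i • v i := by
        simp only [hc', sub_smul, Finset.sum_sub_distrib, mul_smul, ← Finset.smul_sum, hD0,
          smul_zero, sub_zero]
      have hcard : (s.erase istar).card ≤ n := by
        have := Finset.card_erase_of_mem histar_s
        omega
      obtain ⟨t, ht1, c'', h1, h2, h3⟩ := ih (s.erase istar) hcard c' hc'0 hc'supp
      exact ⟨t, ht1, c'', h1, h2, h3.trans hc'sum⟩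
    by_cases hpos : ∃ i, 0 < gext i
    · exact key gext hgext_sum hgext_supp hpos
    · refine key (-gext) (by simpa using hgext_sum) (fun i hi => by simp [hgext_supp i hi]) ?_
      push_neg at hpos
      refine ⟨i₁, ?_⟩
      simp only [Pi.neg_apply, neg_pos]
      exact lt_of_le_of_ne (hpos _) hgext_ne

lemma coneSet_isClosed {d m : ℕ} (v : Fin m → Fin d → ℝ) : IsClosed (coneSet v) := by
  classical
  -- the union over linearly independent subsets
  have hunion : coneSet v = ⋃ t : {t : Finset (Fin m) // LinearIndependent ℝ (fun i : t => v i)},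
      (fun c : (↥(t.1) → ℝ) => ∑ i, c i • v i.1) ''
        {c | ∀ i, 0 ≤ c i} := by
    ext x
    constructor
    · rintro ⟨c, hc0, rfl⟩
      obtain ⟨t, hli, c', h1, h2, h3⟩ :=
        cone_cara v (Finset.univ.card) Finset.univ le_rfl c hc0 (fun i hi => absurd (Finset.mem_univ i) hi)
      refine Set.mem_iUnion.2 ⟨⟨t, hli⟩, ⟨fun i => c' i, fun i => h1 i, ?_⟩⟩
      rw [← h3, ← Finset.sum_subset t.subset_univ (fun i _ hi => by rw [h2 i hi, zero_smul])]
      exact Finset.sum_coe_sort t (fun i => c' i • v i)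
    · intro hx
      obtain ⟨⟨t, hli⟩, c, hc0, rfl⟩ := Set.mem_iUnion.1 hx
      refine ⟨fun i => if h : i ∈ t then c ⟨i, h⟩ else 0, fun i => ?_, ?_⟩
      · by_cases h : i ∈ t
        · simpa [h] using hc0 ⟨i, h⟩
        · simp [h]
      · rw [← Finset.sum_subset t.subset_univ (fun i _ hi => by simp [dif_neg hi])]
        rw [← Finset.sum_attach t (fun i => (if h : i ∈ t then c ⟨i, h⟩ else 0) • v i)]
        exact (Finset.sum_congr rfl fun i _ => by simp [dif_pos i.2]).symm
  rw [hunion]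
  apply isClosed_iUnion_of_finite
  rintro ⟨t, hli⟩
  -- the linear map given by the combination
  set L : (↥t → ℝ) →ₗ[ℝ] (Fin d → ℝ) :=
    { toFun := fun c => ∑ i, c i • v i.1
      map_add' := fun a b => by
        simp [add_smul, Finset.sum_add_distrib]
      map_smul' := fun r a => by
        simp [Finset.smul_sum, mul_smul] } with hL
  have hker : LinearMap.ker L = ⊥ := by
    rw [LinearMap.ker_eq_bot']
    intro c hc
    have := Fintype.linearIndependent_iff.1 hli c hc
    funext i
    exact this i
  have hemb := LinearMap.isClosedEmbedding_of_injective hker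
  have hcl : IsClosed {c : (↥t → ℝ) | ∀ i, 0 ≤ c i} := by
    have : {c : (↥t → ℝ) | ∀ i, 0 ≤ c i} = ⋂ i, {c | 0 ≤ c i} := by
      ext c; simp
    rw [this]
    exact isClosed_iInter fun i => isClosed_le continuous_const (continuous_apply i)
  exact hemb.isClosedMap _ hcl

lemma coneSet_convex {d m : ℕ} (v : Fin m → Fin d → ℝ) : Convex ℝ (coneSet v) := by
  rintro x ⟨cx, hcx0, rfl⟩ y ⟨cy, hcy0, rfl⟩ a b ha hb _
  refine ⟨fun i => a * cx i + b * cy i,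
    fun i => add_nonneg (mul_nonneg ha (hcx0 i)) (mul_nonneg hb (hcy0 i)), ?_⟩
  simp only [Finset.smul_sum, add_smul, mul_smul, Finset.sum_add_distrib]

lemma coneSet_zero_mem {d m : ℕ} (v : Fin m → Fin d → ℝ) : (0 : Fin d → ℝ) ∈ coneSet v :=
  ⟨0, fun _ => le_rfl, by simp⟩

lemma coneSet_smul_mem {d m : ℕ} (v : Fin m → Fin d → ℝ) {x : Fin d → ℝ} (hx : x ∈ coneSet v)
    {t : ℝ} (ht : 0 ≤ t) : t • x ∈ coneSet v := by
  obtain ⟨c, hc0, rfl⟩ := hx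
  exact ⟨fun i => t * c i, fun i => mul_nonneg ht (hc0 i),
    by simp [Finset.smul_sum, mul_smul]⟩

lemma coneSet_gen_mem {d m : ℕ} (v : Fin m → Fin d → ℝ) (i : Fin m) : v i ∈ coneSet v := by
  classical
  refine ⟨fun k => if k = i then 1 else 0, fun k => by dsimp only; split <;> norm_num, ?_⟩
  simp [ite_smul, Finset.sum_ite_eq']

lemma clm_eq_sum {d : ℕ} (f : (Fin d → ℝ) →L[ℝ] ℝ) (z : Fin d → ℝ) :
    f z = ∑ j, z j * f (Pi.single j 1) := by
  classical
  have hz : z = ∑ j, z j • (Pi.single j 1 : Fin d → ℝ) := by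
    funext k
    rw [Finset.sum_apply]
    simp [Pi.single_apply, Finset.sum_ite_eq]
  conv_lhs => rw [hz]
  rw [map_sum]
  simp [smul_eq_mul]

/-- Farkas-type separation: if `x` is not in the cone generated by the `v i`, there is a real
vector `y` nonnegative against all `v i` and negative against `x`. -/
lemma farkas_sep {d m : ℕ} (v : Fin m → Fin d → ℝ) {x : Fin d → ℝ} (hx : x ∉ coneSet v) :
    ∃ y : Fin d → ℝ, (∀ i, 0 ≤ ∑ j, y j * v i j) ∧ ∑ j, y j * x j < 0 := by
  obtain ⟨f, s, hfG, hfx⟩ :=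
    geometric_hahn_banach_closed_point (coneSet_convex v) (coneSet_isClosed v) hx
  have hs0 : 0 < s := by simpa using hfG 0 (coneSet_zero_mem v)
  have hfle : ∀ a ∈ coneSet v, f a ≤ 0 := by
    intro a ha
    by_contra h
    push_neg at h
    have hmem := coneSet_smul_mem v ha (le_of_lt (div_pos (by linarith) h : (0:ℝ) < (s+1)/f a))
    have := hfG _ hmem
    rw [map_smul, smul_eq_mul, div_mul_cancel₀ _ (ne_of_gt h)] at this
    linarith
  refine ⟨fun j => -f (Pi.single j 1), fun i => ?_, ?_⟩
  · have : ∑ j, (-f (Pi.single j 1)) * v i j = -f (v i) := by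
      rw [clm_eq_sum f (v i)]
      simp [Finset.sum_neg_distrib, mul_comm]
    rw [this]
    simpa using hfle (v i) (coneSet_gen_mem v i)
  · have : ∑ j, (-f (Pi.single j 1)) * x j = -f x := by
      rw [clm_eq_sum f x]
      simp [Finset.sum_neg_distrib, mul_comm]
    rw [this]
    linarith

/-- Let `σ ⊆ ℝ^d` be a full-dimensional strongly convex rational cone, with
dual cone `σ^∨`.  Any semigroup homomorphism `φ : σ^∨ ∩ M → ℕ` extends uniquely to a group
homomorphism `M → ℤ`, which is of the form `u ↦ ⟨u, v⟩` for a unique `v ∈ σ ∩ N`. -/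
theorem stmt_5 (d m : ℕ) (g : Fin m → Fin d → ℤ)
    -- `σ` is full-dimensional
    (hfull : Submodule.span ℝ (Set.range fun i => fun j => (g i j : ℝ)) = ⊤)
    -- `σ` is strongly convex
    (hconv : ∀ x ∈ rationalCone d m g, -x ∈ rationalCone d m g → x = 0)
    (φ : (Fin d → ℤ) → ℕ)
    -- `φ` is a semigroup homomorphism on `σ^∨ ∩ M`
    (hφ : ∀ u u' : Fin d → ℤ,
      (∀ x ∈ rationalCone d m g, 0 ≤ ∑ j, (u j : ℝ) * x j) →
      (∀ x ∈ rationalCone d m g, 0 ≤ ∑ j, (u' j : ℝ) * x j) →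
      φ (u + u') = φ u + φ u')
    (hφ0 : φ 0 = 0) :
    ∃! w : Fin d → ℤ,
      (fun j => (w j : ℝ)) ∈ rationalCone d m g ∧
      ∀ u : Fin d → ℤ, (∀ x ∈ rationalCone d m g, 0 ≤ ∑ j, (u j : ℝ) * x j) →
        (φ u : ℤ) = ∑ j, u j * w j := by
  classical
  set v : Fin m → Fin d → ℝ := fun i j => (g i j : ℝ) with hv
  have hGeq : rationalCone d m g = coneSet v := by
    ext x
    constructor
    · rintro ⟨c, hc0, hc⟩
      refine ⟨c, hc0, funext fun j => ?_⟩
      rw [hc j, Finset.sum_apply]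
      simp [hv, smul_eq_mul]
    · rintro ⟨c, hc0, rfl⟩
      refine ⟨c, hc0, fun j => ?_⟩
      rw [Finset.sum_apply]
      simp [hv, smul_eq_mul]
  set Du : (Fin d → ℤ) → Prop :=
    fun u => ∀ x ∈ rationalCone d m g, 0 ≤ ∑ j, (u j : ℝ) * x j with hDu
  have hvmem : ∀ i, v i ∈ rationalCone d m g := fun i => hGeq ▸ coneSet_gen_mem v i
  have hDu_iff : ∀ u, Du u ↔ ∀ i, 0 ≤ ∑ j, (u j : ℝ) * v i j := by
    intro u
    constructor
    · exact fun h i => h (v i) (hvmem i)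
    · intro h x hx
      rw [hGeq] at hx
      obtain ⟨c, hc0, rfl⟩ := hx
      have heq : ∑ j, (u j : ℝ) * (∑ i, c i • v i) j = ∑ i, c i * ∑ j, (u j : ℝ) * v i j := by
        simp only [Finset.sum_apply, Pi.smul_apply, smul_eq_mul, Finset.mul_sum]
        rw [Finset.sum_comm]
        exact Finset.sum_congr rfl fun i _ => Finset.sum_congr rfl fun j _ => by ring
      rw [heq]
      exact Finset.sum_nonneg fun i _ => mul_nonneg (hc0 i) (h i)
  set A : (Fin d → ℤ) → Fin m → ℤ := fun u i => ∑ j, u j * g i j with hA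
  have hAcast : ∀ u i, ((A u i : ℤ) : ℝ) = ∑ j, (u j : ℝ) * v i j := by
    intro u i
    simp only [hA, hv]
    push_cast
    rfl
  have hDu_iffA : ∀ u, Du u ↔ ∀ i, 0 ≤ A u i := by
    intro u
    rw [hDu_iff u]
    constructor
    · intro h i
      have := h i
      rw [← hAcast] at this
      exact_mod_cast this
    · intro h i
      rw [← hAcast]
      exact_mod_cast h i
  have hgzero : ∀ i, v i = 0 → ∀ u : Fin d → ℤ, A u i = 0 := by
    intro i hvi u
    have hg : ∀ j, g i j = 0 := by
      intro j
      have h2 : ((g i j : ℤ) : ℝ) = 0 := by simpa [hv] using congrFun hvi j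
      exact_mod_cast h2
    simp [hA, hg]
  -- dot products are continuous
  have hdotcont : ∀ a : Fin d → ℝ, Continuous fun y : Fin d → ℝ => ∑ j, y j * a j :=
    fun a => continuous_finset_sum _ fun j _ => (continuous_apply j).mul continuous_const
  -- Step 1: an integer vector strictly positive against every nonzero generator
  obtain ⟨u₀, hu₀⟩ : ∃ u₀ : Fin d → ℤ, ∀ i, v i ≠ 0 → 0 < ∑ j, ((u₀ j : ℤ) : ℝ) * v i j := by
    set C : Set (Fin d → ℝ) := {x | ∃ c : Fin m → ℝ, (∀ i, 0 ≤ c i) ∧ (∀ i, v i = 0 → c i = 0)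
      ∧ ∑ i, c i = 1 ∧ x = ∑ i, c i • v i} with hC
    have hCconv : Convex ℝ C := by
      rintro x ⟨cx, hcx0, hcxs, hcx1, rfl⟩ y ⟨cy, hcy0, hcys, hcy1, rfl⟩ a b ha hb hab
      refine ⟨fun i => a * cx i + b * cy i,
        fun i => add_nonneg (mul_nonneg ha (hcx0 i)) (mul_nonneg hb (hcy0 i)),
        fun i hi => by dsimp only; rw [hcxs i hi, hcys i hi]; ring, ?_, ?_⟩
      · rw [Finset.sum_add_distrib, ← Finset.mul_sum, ← Finset.mul_sum, hcx1, hcy1]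
        simpa using hab
      · simp only [Finset.smul_sum, add_smul, mul_smul, Finset.sum_add_distrib]
    have hCclosed : IsClosed C := by
      set K : Set (Fin m → ℝ) := {c | (∀ i, 0 ≤ c i) ∧ (∀ i, v i = 0 → c i = 0) ∧ ∑ i, c i = 1}
        with hK
      have hKclosed : IsClosed K := by
        have h1 : IsClosed {c : Fin m → ℝ | ∀ i, 0 ≤ c i} := by
          rw [show {c : Fin m → ℝ | ∀ i, 0 ≤ c i} = ⋂ i, {c | 0 ≤ c i} from by ext c; simp]
          exact isClosed_iInter fun i => isClosed_le continuous_const (continuous_apply i)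
        have h2 : IsClosed {c : Fin m → ℝ | ∀ i, v i = 0 → c i = 0} := by
          rw [show {c : Fin m → ℝ | ∀ i, v i = 0 → c i = 0}
              = ⋂ i, {c | v i = 0 → c i = 0} from by ext c; simp]
          refine isClosed_iInter fun i => ?_
          by_cases hvi : v i = 0
          · simp only [hvi, forall_true_left]
            exact isClosed_eq (continuous_apply i) continuous_const
          · rw [show {c : Fin m → ℝ | v i = 0 → c i = 0} = Set.univ from by ext c; simp [hvi]]
            exact isClosed_univ
        have h3 : IsClosed {c : Fin m → ℝ | ∑ i, c i = 1} :=
          isClosed_eq (continuous_finset_sum _ fun i _ => continuous_apply i) continuous_const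
        have hKeq : K = {c : Fin m → ℝ | ∀ i, 0 ≤ c i} ∩
            ({c : Fin m → ℝ | ∀ i, v i = 0 → c i = 0} ∩ {c : Fin m → ℝ | ∑ i, c i = 1}) := by
          ext c
          simp only [hK, Set.mem_inter_iff, Set.mem_setOf_eq]
        rw [hKeq]
        exact h1.inter (h2.inter h3)
      have hKsub : K ⊆ Set.Icc 0 1 := by
        rintro c ⟨h0, _, h1⟩
        refine ⟨fun i => h0 i, fun i => ?_⟩
        calc c i ≤ ∑ k, c k := Finset.single_le_sum (fun k _ => h0 k) (Finset.mem_univ i)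
          _ = 1 := h1
        -- `c ≤ 1` in the pi order
      have hKcomp : IsCompact K := IsCompact.of_isClosed_subset isCompact_Icc hKclosed hKsub
      have hCim : C = (fun c : Fin m → ℝ => ∑ i, c i • v i) '' K := by
        ext x
        constructor
        · rintro ⟨c, h1, h2, h3, rfl⟩
          exact ⟨c, ⟨h1, h2, h3⟩, rfl⟩
        · rintro ⟨c, ⟨h1, h2, h3⟩, rfl⟩
          exact ⟨c, h1, h2, h3, rfl⟩
      rw [hCim]
      exact (hKcomp.image (continuous_finset_sum _ fun i _ =>
        (continuous_apply i).smul continuous_const)).isClosed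
    have h0C : (0 : Fin d → ℝ) ∉ C := by
      rintro ⟨c, hc0, hcsupp, hcsum, hrep⟩
      have hex : ∃ i, c i ≠ 0 := by
        by_contra h
        push_neg at h
        rw [Finset.sum_congr rfl (fun i _ => h i)] at hcsum
        simp at hcsum
      obtain ⟨i₀, hi₀⟩ := hex
      have hci₀ : 0 < c i₀ := (hc0 i₀).lt_of_ne (Ne.symm hi₀)
      have hvi₀ : v i₀ ≠ 0 := fun h => hi₀ (hcsupp i₀ h)
      have hx : c i₀ • v i₀ ∈ rationalCone d m g := by
        rw [hGeq]
        exact coneSet_smul_mem v (coneSet_gen_mem v i₀) hci₀.le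
      have hnx : -(c i₀ • v i₀) ∈ rationalCone d m g := by
        rw [hGeq]
        refine ⟨fun k => if k = i₀ then 0 else c k,
          fun k => by dsimp only; split; exacts [le_rfl, hc0 k], ?_⟩
        have hterm : ∀ k, (if k = i₀ then (0:ℝ) else c k) • v k
            = c k • v k - (if k = i₀ then c i₀ • v i₀ else 0) := by
          intro k
          by_cases h : k = i₀ <;> simp [h]
        rw [show (∑ k, (fun k => if k = i₀ then (0:ℝ) else c k) k • v k)
            = ∑ k, (c k • v k - (if k = i₀ then c i₀ • v i₀ else 0)) from
          Finset.sum_congr rfl fun k _ => hterm k]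
        rw [Finset.sum_sub_distrib, Finset.sum_ite_eq' Finset.univ i₀, ← hrep]
        simp
      have := hconv _ hx hnx
      exact (smul_ne_zero (ne_of_gt hci₀) hvi₀) this
    obtain ⟨f, s, hfC, hf0⟩ := geometric_hahn_banach_closed_point hCconv hCclosed h0C
    have hs : s < 0 := by simpa using hf0
    set U₀ := {y : Fin d → ℝ | ∀ i, v i ≠ 0 → 0 < ∑ j, y j * v i j} with hU₀
    have hU₀open : IsOpen U₀ := by
      rw [show U₀ = ⋂ i, {y : Fin d → ℝ | v i ≠ 0 → 0 < ∑ j, y j * v i j} from by ext y; simp [hU₀]]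
      refine isOpen_iInter_of_finite fun i => ?_
      by_cases hvi : v i = 0
      · rw [show {y : Fin d → ℝ | v i ≠ 0 → 0 < ∑ j, y j * v i j} = Set.univ from
          by ext y; simp [hvi]]
        exact isOpen_univ
      · rw [show {y : Fin d → ℝ | v i ≠ 0 → 0 < ∑ j, y j * v i j}
            = {y : Fin d → ℝ | 0 < ∑ j, y j * v i j} from by ext y; simp [hvi]]
        exact isOpen_lt continuous_const (hdotcont (v i))
    have hU₀cone : ∀ y ∈ U₀, ∀ t : ℝ, 0 < t → t • y ∈ U₀ := by
      intro y hy t ht i hvi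
      have : ∑ j, (t • y) j * v i j = t * ∑ j, y j * v i j := by
        simp [Finset.mul_sum, mul_assoc]
      rw [this]
      exact mul_pos ht (hy i hvi)
    have hU₀ne : U₀.Nonempty := by
      refine ⟨fun j => -f (Pi.single j 1), fun i hvi => ?_⟩
      have hviC : v i ∈ C := by
        refine ⟨fun k => if k = i then 1 else 0, fun k => by dsimp only; split <;> norm_num,
          fun k hk => ?_, by simp, by simp [ite_smul, Finset.sum_ite_eq']⟩
        dsimp only
        split
        · next h => exact absurd hk (h ▸ hvi)
        · rfl
      have hdot : ∑ j, (-f (Pi.single j 1)) * v i j = -f (v i) := by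
        rw [clm_eq_sum f (v i)]
        simp [Finset.sum_neg_distrib, mul_comm]
      rw [hdot]
      have := hfC (v i) hviC
      linarith
    obtain ⟨u₀, hu₀⟩ := exists_int_point U₀ hU₀open hU₀cone hU₀ne
    exact ⟨u₀, fun i hvi => hu₀ i hvi⟩
  have hu₀A : ∀ i, v i ≠ 0 → 1 ≤ A u₀ i := by
    intro i hvi
    have h1 := hu₀ i hvi
    rw [← hAcast] at h1
    have : (0:ℤ) < A u₀ i := by exact_mod_cast h1
    omega
  have hDu₀ : Du u₀ := by
    rw [hDu_iffA]
    intro i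
    by_cases hvi : v i = 0
    · rw [hgzero i hvi u₀]
    · exact le_trans (by norm_num) (hu₀A i hvi)
  have hAadd : ∀ u u' i, A (u + u') i = A u i + A u' i := by
    intro u u' i
    simp [hA, add_mul, Finset.sum_add_distrib]
  have hAnsmul : ∀ (k : ℕ) i, A (k • u₀) i = (k : ℤ) * A u₀ i := by
    intro k i
    simp only [hA, Pi.smul_apply]
    simp [nsmul_eq_mul, Finset.mul_sum, mul_assoc]
  have hshift : ∀ u : Fin d → ℤ, ∃ k : ℕ, Du (u + k • u₀) := by
    intro u
    refine ⟨∑ i, (A u i).natAbs, ?_⟩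
    rw [hDu_iffA]
    intro i
    rw [hAadd, hAnsmul]
    by_cases hvi : v i = 0
    · rw [hgzero i hvi u, hgzero i hvi u₀]
      simp
    · have h1 := hu₀A i hvi
      have hk : ((A u i).natAbs : ℤ) ≤ ((∑ i, (A u i).natAbs : ℕ) : ℤ) := by
        have := Finset.single_le_sum (f := fun i => (A u i).natAbs)
          (fun k _ => Nat.zero_le _) (Finset.mem_univ i)
        exact_mod_cast this
      have h2 : ((∑ i, (A u i).natAbs : ℕ) : ℤ) * 1 ≤ ((∑ i, (A u i).natAbs : ℕ) : ℤ) * A u₀ i :=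
        mul_le_mul_of_nonneg_left h1 (Int.ofNat_nonneg _)
      omega
  have hDu_add : ∀ a b, Du a → Du b → Du (a + b) := by
    intro a b ha hb x hx
    have heq : ∑ j, ((a + b) j : ℝ) * x j = ∑ j, (a j : ℝ) * x j + ∑ j, (b j : ℝ) * x j := by
      rw [← Finset.sum_add_distrib]
      refine Finset.sum_congr rfl fun j _ => ?_
      simp only [Pi.add_apply]
      push_cast
      ring
    rw [heq]
    exact add_nonneg (ha x hx) (hb x hx)
  have hDu_nsmul : ∀ (k : ℕ) a, Du a → Du (k • a) := by
    intro k a ha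
    induction k with
    | zero =>
      intro x hx
      simp
    | succ k ihk =>
      rw [succ_nsmul]
      exact hDu_add _ _ ihk ha
  have hφadd : ∀ a b, Du a → Du b → φ (a + b) = φ a + φ b := fun a b ha hb => hφ a b ha hb
  have hφnsmul : ∀ k : ℕ, φ (k • u₀) = k * φ u₀ := by
    intro k
    induction k with
    | zero => simpa using hφ0
    | succ k ihk =>
      rw [succ_nsmul, hφadd _ _ (hDu_nsmul k u₀ hDu₀) hDu₀, ihk]
      ring
  have hpsi_eq : ∀ u (k k' : ℕ), Du (u + k • u₀) → Du (u + k' • u₀) →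
      (φ (u + k • u₀) : ℤ) - (k : ℤ) * (φ u₀ : ℤ)
        = (φ (u + k' • u₀) : ℤ) - (k' : ℤ) * (φ u₀ : ℤ) := by
    intro u k k' h1 h2
    have hcomm : (u + k • u₀) + k' • u₀ = (u + k' • u₀) + k • u₀ := by
      rw [add_assoc, add_assoc, add_comm (k • u₀)]
    have e1 : φ ((u + k • u₀) + k' • u₀) = φ (u + k • u₀) + φ (k' • u₀) :=
      hφadd _ _ h1 (hDu_nsmul k' u₀ hDu₀)
    have e2 : φ ((u + k' • u₀) + k • u₀) = φ (u + k' • u₀) + φ (k • u₀) :=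
      hφadd _ _ h2 (hDu_nsmul k u₀ hDu₀)
    rw [hcomm] at e1
    have e3 := e1.symm.trans e2
    rw [hφnsmul, hφnsmul] at e3
    have e4 := congrArg (Nat.cast : ℕ → ℤ) e3
    push_cast at e4
    linarith
  choose kk hkk using hshift
  set ψ : (Fin d → ℤ) → ℤ :=
    fun u => (φ (u + kk u • u₀) : ℤ) - (kk u : ℤ) * (φ u₀ : ℤ) with hψ
  have hψdef : ∀ u (k : ℕ), Du (u + k • u₀) →
      ψ u = (φ (u + k • u₀) : ℤ) - (k : ℤ) * (φ u₀ : ℤ) :=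
    fun u k h => hpsi_eq u (kk u) k (hkk u) h
  have hψφ : ∀ u, Du u → ψ u = (φ u : ℤ) := by
    intro u h
    rw [hψdef u 0 (by simpa using h)]
    simp
  have hψadd : ∀ a b, ψ (a + b) = ψ a + ψ b := by
    intro a b
    have hvec : (a + b) + (kk a + kk b) • u₀ = (a + kk a • u₀) + (b + kk b • u₀) := by
      rw [add_nsmul]
      abel
    have h3 : Du ((a + b) + (kk a + kk b) • u₀) := by
      rw [hvec]
      exact hDu_add _ _ (hkk a) (hkk b)
    rw [hψdef (a + b) (kk a + kk b) h3]
    have e1 : φ ((a + b) + (kk a + kk b) • u₀) = φ (a + kk a • u₀) + φ (b + kk b • u₀) := by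
      rw [hvec]
      exact hφadd _ _ (hkk a) (hkk b)
    rw [e1, hψ]
    push_cast
    ring
  set Ψ : (Fin d → ℤ) →+ ℤ := AddMonoidHom.mk' ψ hψadd with hΨ
  set w : Fin d → ℤ := fun j => ψ (Pi.single j 1) with hw
  have hrepr : ∀ u : Fin d → ℤ, ψ u = ∑ j, u j * w j := by
    intro u
    have hu : u = ∑ j, u j • (Pi.single j 1 : Fin d → ℤ) := by
      funext k
      rw [Finset.sum_apply]
      simp [Pi.single_apply, Finset.sum_ite_eq]
    calc ψ u = Ψ u := rfl
      _ = Ψ (∑ j, u j • (Pi.single j 1 : Fin d → ℤ)) := by rw [← hu]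
      _ = ∑ j, Ψ (u j • (Pi.single j 1 : Fin d → ℤ)) := map_sum Ψ _ _
      _ = ∑ j, u j * w j := by
        refine Finset.sum_congr rfl fun j _ => ?_
        rw [map_zsmul Ψ]
        simp [hΨ, hw, AddMonoidHom.mk'_apply, smul_eq_mul]
  have hkey : ∀ u, Du u → (φ u : ℤ) = ∑ j, u j * w j := by
    intro u h
    rw [← hψφ u h, hrepr u]
  -- membership of `w` in the cone
  have hwmem : (fun j => ((w j : ℤ) : ℝ)) ∈ rationalCone d m g := by
    by_contra hwmem
    rw [hGeq] at hwmem
    obtain ⟨y, hy1, hy2⟩ := farkas_sep v hwmem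
    set y₀ : Fin d → ℝ := fun j => ((u₀ j : ℤ) : ℝ) with hy₀
    set a : ℝ := ∑ j, y j * ((w j : ℤ) : ℝ) with ha
    set b : ℝ := ∑ j, y₀ j * ((w j : ℤ) : ℝ) with hb
    have hA0 : a < 0 := hy2
    set ε : ℝ := min 1 ((-a) / (2 * |b| + 1)) with hε
    have hεpos : 0 < ε := by
      apply lt_min one_pos
      apply div_pos (by linarith) (by positivity)
    have hεb : a + ε * b < 0 := by
      rcases le_or_gt b 0 with hb0 | hb0
      · have : ε * b ≤ 0 := mul_nonpos_of_nonneg_of_nonpos hεpos.le hb0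
        linarith
      · have h1 : ε ≤ (-a) / (2 * |b| + 1) := min_le_right _ _
        have h2 : ε * (2 * |b| + 1) ≤ -a := by
          rw [← le_div_iff₀ (by positivity)]
          exact h1
        have h3 : ε * b < ε * (2 * |b| + 1) := by
          apply mul_lt_mul_of_pos_left _ hεpos
          rw [abs_of_pos hb0]
          linarith
        linarith
    set U₁ : Set (Fin d → ℝ) := {z | (∀ i, v i ≠ 0 → 0 < ∑ j, z j * v i j)
      ∧ ∑ j, z j * ((w j : ℤ) : ℝ) < 0} with hU₁
    have hU₁open : IsOpen U₁ := by
      apply IsOpen.inter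
      · show IsOpen {z : Fin d → ℝ | ∀ i, v i ≠ 0 → 0 < ∑ j, z j * v i j}
        rw [show {z : Fin d → ℝ | ∀ i, v i ≠ 0 → 0 < ∑ j, z j * v i j}
            = ⋂ i, {z : Fin d → ℝ | v i ≠ 0 → 0 < ∑ j, z j * v i j} from by ext z; simp]
        refine isOpen_iInter_of_finite fun i => ?_
        by_cases hvi : v i = 0
        · rw [show {z : Fin d → ℝ | v i ≠ 0 → 0 < ∑ j, z j * v i j} = Set.univ from
            by ext z; simp [hvi]]
          exact isOpen_univ
        · rw [show {z : Fin d → ℝ | v i ≠ 0 → 0 < ∑ j, z j * v i j}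
              = {z : Fin d → ℝ | 0 < ∑ j, z j * v i j} from by ext z; simp [hvi]]
          exact isOpen_lt continuous_const (hdotcont (v i))
      · exact isOpen_lt (hdotcont _) continuous_const
    have hU₁cone : ∀ z ∈ U₁, ∀ t : ℝ, 0 < t → t • z ∈ U₁ := by
      rintro z ⟨hz1, hz2⟩ t ht
      constructor
      · intro i hvi
        have heq : ∑ j, (t • z) j * v i j = t * ∑ j, z j * v i j := by
          simp [Finset.mul_sum, mul_assoc]
        rw [heq]
        exact mul_pos ht (hz1 i hvi)
      · have heq : ∑ j, (t • z) j * ((w j : ℤ) : ℝ) = t * ∑ j, z j * ((w j : ℤ) : ℝ) := by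
          simp [Finset.mul_sum, mul_assoc]
        rw [heq]
        exact mul_neg_of_pos_of_neg ht hz2
    have hU₁ne : U₁.Nonempty := by
      refine ⟨y + ε • y₀, ?_, ?_⟩
      · intro i hvi
        have heq : ∑ j, (y + ε • y₀) j * v i j
            = (∑ j, y j * v i j) + ε * ∑ j, y₀ j * v i j := by
          rw [Finset.mul_sum, ← Finset.sum_add_distrib]
          refine Finset.sum_congr rfl fun j _ => ?_
          simp only [Pi.add_apply, Pi.smul_apply, smul_eq_mul]
          ring
        rw [heq]
        have h1 := hy1 i
        have h2 := hu₀ i hvi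
        have h3 : 0 < ε * ∑ j, y₀ j * v i j := mul_pos hεpos h2
        linarith
      · have heq : ∑ j, (y + ε • y₀) j * ((w j : ℤ) : ℝ) = a + ε * b := by
          rw [ha, hb, Finset.mul_sum, ← Finset.sum_add_distrib]
          refine Finset.sum_congr rfl fun j _ => ?_
          simp only [Pi.add_apply, Pi.smul_apply, smul_eq_mul]
          ring
        rw [heq]
        exact hεb
    obtain ⟨u₁, hu₁⟩ := exists_int_point U₁ hU₁open hU₁cone hU₁ne
    obtain ⟨hu₁1, hu₁2⟩ := hu₁
    have hDu₁ : Du u₁ := by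
      rw [hDu_iff]
      intro i
      by_cases hvi : v i = 0
      · simp [hvi]
      · exact (hu₁1 i hvi).le
    have hcontr := hkey u₁ hDu₁
    have hcast : (0:ℝ) ≤ ∑ j, (u₁ j : ℝ) * ((w j : ℤ) : ℝ) := by
      have h0 : (0:ℤ) ≤ ∑ j, u₁ j * w j := hcontr ▸ Int.ofNat_nonneg _
      exact_mod_cast h0
    linarith
  -- the sum against a single basis vector
  have hsingle : ∀ (ww : Fin d → ℤ) (j : Fin d),
      ∑ j', (Pi.single j 1 : Fin d → ℤ) j' * ww j' = ww j := by
    intro ww j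
    simp [Pi.single_apply, ite_mul, Finset.sum_ite_eq]
  have hsplit : ∀ (p q ww : Fin d → ℤ),
      ∑ j, (p + q) j * ww j = ∑ j, p j * ww j + ∑ j, q j * ww j := by
    intro p q ww
    rw [← Finset.sum_add_distrib]
    exact Finset.sum_congr rfl fun j _ => by simp [add_mul]
  refine ⟨w, ⟨hwmem, fun u hu => hkey u hu⟩, ?_⟩
  rintro w' ⟨-, hw'⟩
  funext j
  have h1 := hkk (Pi.single j 1)
  have h2 : Du ((kk (Pi.single j 1) : ℕ) • u₀) := hDu_nsmul _ u₀ hDu₀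
  have e1 := hkey _ h1
  have e1' := hw' _ h1
  have e2 := hkey _ h2
  have e2' := hw' _ h2
  rw [hsplit, hsingle] at e1 e1'
  omega
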